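/- (Trace-type boundary estimate.) Let p and u=(u₁,u₂) be smooth functions on ℝ×[0,1], Γ-periodic in x₁, with ∇·u=0 in Ω and u₂=0 at x₂=0 and at x₂=1. Then |∫₀^Γ ( p(x₁,1)·∂₁u₁(x₁,1) + p(x₁,0)·∂₁u₁(x₁,0) ) dx₁| ≤ 3·‖p‖_{H¹}·‖∂₂u‖_{L²}. -/

import Mathlib

noncomputable section
open MeasureTheory Filter Set
open scoped ENNReal

namespace RB

/-- A time-dependent scalar field: arguments t, x₁, x₂. -/
abbrev TField := ℝ → ℝ → ℝ → ℝ
/-- A static scalar field: arguments x₁, x₂. -/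
abbrev SField := ℝ → ℝ → ℝ

def tsmooth (f : TField) : Prop :=
  ContDiff ℝ (⊤ : ℕ∞) (fun q : ℝ × ℝ × ℝ => f q.1 q.2.1 q.2.2)
def ssmooth (f : SField) : Prop :=
  ContDiff ℝ (⊤ : ℕ∞) (fun q : ℝ × ℝ => f q.1 q.2)
def tperiodic (Γ : ℝ) (f : TField) : Prop := ∀ t x1 x2, f t (x1 + Γ) x2 = f t x1 x2
def speriodic (Γ : ℝ) (f : SField) : Prop := ∀ x1 x2, f (x1 + Γ) x2 = f x1 x2

/-- time derivative -/
def dt (f : TField) : TField := fun t x1 x2 => deriv (fun s => f s x1 x2) t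
/-- partial derivative in x₁ (time-dependent field) -/
def d1 (f : TField) : TField := fun t x1 x2 => deriv (fun y => f t y x2) x1
/-- partial derivative in x₂ (time-dependent field) -/
def d2 (f : TField) : TField := fun t x1 x2 => deriv (fun y => f t x1 y) x2
/-- partial derivative in x₁ (static field) -/
def q1 (f : SField) : SField := fun x1 x2 => deriv (fun y => f y x2) x1
/-- partial derivative in x₂ (static field) -/
def q2 (f : SField) : SField := fun x1 x2 => deriv (fun y => f x1 y) x2

/-- Integral over Ω = [0,Γ]×[0,1]. -/
def intΩ (Γ : ℝ) (g : SField) : ℝ :=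
  ∫ x1 in Ioc (0:ℝ) Γ, ∫ x2 in Ioc (0:ℝ) 1, g x1 x2

/-- Long-time horizontal average ⟨f⟩ of a quantity f(t, x₁). -/
def ltavg (Γ : ℝ) (f : ℝ → ℝ → ℝ) : ℝ :=
  limsup (fun t => (1/t) * ∫ s in Ioc (0:ℝ) t, (1/Γ) * ∫ x1 in Ioc (0:ℝ) Γ, f s x1) atTop

/-- spatial L² norm of a static scalar field over Ω -/
def sL2 (Γ : ℝ) (f : SField) : ℝ := Real.sqrt (intΩ Γ (fun x1 x2 => f x1 x2 ^ 2))
/-- spatial L^r norm of a static scalar field over Ω -/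
def sLr (Γ r : ℝ) (f : SField) : ℝ := (intΩ Γ (fun x1 x2 => |f x1 x2| ^ r)) ^ (1/r)
/-- H¹ norm of a static scalar field over Ω -/
def sH1 (Γ : ℝ) (f : SField) : ℝ :=
  Real.sqrt (intΩ Γ (fun x1 x2 => f x1 x2 ^ 2 + q1 f x1 x2 ^ 2 + q2 f x1 x2 ^ 2))

/-- A classical solution of the Boussinesq system on Ω = [0,Γ]×[0,1] with
Rayleigh number Ra, Prandtl number Pr, slip length Ls ∈ (0,∞]
(Navier-slip with friction coefficient `(Ls⁻¹).toReal`; for Ls = ∞ this is free-slip). -/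
structure Sol (Γ Ra Pr : ℝ) (Ls : ℝ≥0∞) where
  u1 : TField
  u2 : TField
  T : TField
  p : TField
  smooth_u1 : tsmooth u1
  smooth_u2 : tsmooth u2
  smooth_T : tsmooth T
  smooth_p : tsmooth p
  periodic_u1 : tperiodic Γ u1
  periodic_u2 : tperiodic Γ u2
  periodic_T : tperiodic Γ T
  periodic_p : tperiodic Γ p
  momentum1 : ∀ t x1 x2, 0 ≤ t → x2 ∈ Icc (0:ℝ) 1 →
    Pr⁻¹ * (dt u1 t x1 x2 + u1 t x1 x2 * d1 u1 t x1 x2 + u2 t x1 x2 * d2 u1 t x1 x2)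
      - (d1 (d1 u1) t x1 x2 + d2 (d2 u1) t x1 x2) + d1 p t x1 x2 = 0
  momentum2 : ∀ t x1 x2, 0 ≤ t → x2 ∈ Icc (0:ℝ) 1 →
    Pr⁻¹ * (dt u2 t x1 x2 + u1 t x1 x2 * d1 u2 t x1 x2 + u2 t x1 x2 * d2 u2 t x1 x2)
      - (d1 (d1 u2) t x1 x2 + d2 (d2 u2) t x1 x2) + d2 p t x1 x2 = Ra * T t x1 x2
  incomp : ∀ t x1 x2, 0 ≤ t → x2 ∈ Icc (0:ℝ) 1 →
    d1 u1 t x1 x2 + d2 u2 t x1 x2 = 0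
  heat : ∀ t x1 x2, 0 ≤ t → x2 ∈ Icc (0:ℝ) 1 →
    dt T t x1 x2 + u1 t x1 x2 * d1 T t x1 x2 + u2 t x1 x2 * d2 T t x1 x2
      - (d1 (d1 T) t x1 x2 + d2 (d2 T) t x1 x2) = 0
  T_bot : ∀ t x1, 0 ≤ t → T t x1 0 = 1
  T_top : ∀ t x1, 0 ≤ t → T t x1 1 = 0
  u2_bot : ∀ t x1, 0 ≤ t → u2 t x1 0 = 0
  u2_top : ∀ t x1, 0 ≤ t → u2 t x1 1 = 0
  slip_top : ∀ t x1, 0 ≤ t → d2 u1 t x1 1 = -(Ls⁻¹).toReal * u1 t x1 1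
  slip_bot : ∀ t x1, 0 ≤ t → d2 u1 t x1 0 = (Ls⁻¹).toReal * u1 t x1 0

variable {Γ Ra Pr : ℝ} {Ls : ℝ≥0∞}

/-- The Nusselt number Nu = ⟨∫₀¹ (u₂T − ∂₂T) dx₂⟩. -/
def Nu (S : Sol Γ Ra Pr Ls) : ℝ :=
  ltavg Γ (fun t x1 => ∫ x2 in (0:ℝ)..1, (S.u2 t x1 x2 * S.T t x1 x2 - d2 S.T t x1 x2))

/-- The initial temperature satisfies 0 ≤ T₀ ≤ 1 on Ω. -/
def T0cond (S : Sol Γ Ra Pr Ls) : Prop :=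
  ∀ x1 x2, x2 ∈ Icc (0:ℝ) 1 → S.T 0 x1 x2 ∈ Icc (0:ℝ) 1

/-- The vorticity ω = ∂₁u₂ − ∂₂u₁. -/
def vort (S : Sol Γ Ra Pr Ls) : TField :=
  fun t x1 x2 => d1 S.u2 t x1 x2 - d2 S.u1 t x1 x2

/-- |∇u|² pointwise. -/
def gradSq (S : Sol Γ Ra Pr Ls) : TField := fun t x1 x2 =>
  d1 S.u1 t x1 x2 ^ 2 + d2 S.u1 t x1 x2 ^ 2 + d1 S.u2 t x1 x2 ^ 2 + d2 S.u2 t x1 x2 ^ 2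

/-- |∇²u|² pointwise: sum of squares of all second spatial derivatives of u. -/
def hessSq (S : Sol Γ Ra Pr Ls) : TField := fun t x1 x2 =>
  d1 (d1 S.u1) t x1 x2 ^ 2 + d1 (d2 S.u1) t x1 x2 ^ 2 +
  d2 (d1 S.u1) t x1 x2 ^ 2 + d2 (d2 S.u1) t x1 x2 ^ 2 +
  d1 (d1 S.u2) t x1 x2 ^ 2 + d1 (d2 S.u2) t x1 x2 ^ 2 +
  d2 (d1 S.u2) t x1 x2 ^ 2 + d2 (d2 S.u2) t x1 x2 ^ 2

/-- ‖u(t)‖_{L²}. -/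
def uL2 (S : Sol Γ Ra Pr Ls) (t : ℝ) : ℝ :=
  Real.sqrt (intΩ Γ (fun x1 x2 => S.u1 t x1 x2 ^ 2 + S.u2 t x1 x2 ^ 2))

/-- ‖u₀‖_{W^{1,4}}. -/
def W14u0 (S : Sol Γ Ra Pr Ls) : ℝ :=
  (intΩ Γ (fun x1 x2 =>
    (S.u1 0 x1 x2 ^ 2 + S.u2 0 x1 x2 ^ 2) ^ 2 + (gradSq S 0 x1 x2) ^ 2)) ^ ((1:ℝ)/4)

/-- ‖ω(t)‖_{L⁴}. -/
def omegaL4 (S : Sol Γ Ra Pr Ls) (t : ℝ) : ℝ :=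
  (intΩ Γ (fun x1 x2 => vort S t x1 x2 ^ 4)) ^ ((1:ℝ)/4)


-- ===== auxiliary material for trace_type_estimate =====

abbrev unc (f : SField) : ℝ × ℝ → ℝ := fun q => f q.1 q.2

lemma hasDerivAt_slice1 {f : SField} (hf : ssmooth f) (x1 x2 : ℝ) :
    HasDerivAt (fun y => f y x2) (fderiv ℝ (unc f) (x1, x2) (1, 0)) x1 := by
  have h := (hf.differentiable (by simp) (x1, x2)).hasFDerivAt
  have h2 : HasDerivAt (fun y : ℝ => ((y, x2) : ℝ × ℝ)) ((1 : ℝ), (0 : ℝ)) x1 :=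
    (hasDerivAt_id x1).prodMk (hasDerivAt_const x1 x2)
  exact h.comp_hasDerivAt x1 h2

lemma hasDerivAt_slice2 {f : SField} (hf : ssmooth f) (x1 x2 : ℝ) :
    HasDerivAt (fun y => f x1 y) (fderiv ℝ (unc f) (x1, x2) (0, 1)) x2 := by
  have h := (hf.differentiable (by simp) (x1, x2)).hasFDerivAt
  have h2 : HasDerivAt (fun y : ℝ => ((x1, y) : ℝ × ℝ)) ((0 : ℝ), (1 : ℝ)) x2 :=
    (hasDerivAt_const x2 x1).prodMk (hasDerivAt_id x2)
  exact h.comp_hasDerivAt x2 h2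

lemma q1_eq {f : SField} (hf : ssmooth f) (x1 x2 : ℝ) :
    q1 f x1 x2 = fderiv ℝ (unc f) (x1, x2) (1, 0) :=
  (hasDerivAt_slice1 hf x1 x2).deriv

lemma q2_eq {f : SField} (hf : ssmooth f) (x1 x2 : ℝ) :
    q2 f x1 x2 = fderiv ℝ (unc f) (x1, x2) (0, 1) :=
  (hasDerivAt_slice2 hf x1 x2).deriv

lemma ssmooth_q1 {f : SField} (hf : ssmooth f) : ssmooth (q1 f) := by
  have h : ContDiff ℝ (⊤ : ℕ∞) (fun q : ℝ × ℝ => fderiv ℝ (unc f) q ((1 : ℝ), (0 : ℝ))) :=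
    (hf.fderiv_right (mod_cast le_rfl)).clm_apply contDiff_const
  have he : (fun q : ℝ × ℝ => q1 f q.1 q.2)
      = fun q : ℝ × ℝ => fderiv ℝ (unc f) q ((1 : ℝ), (0 : ℝ)) := by
    funext q; exact q1_eq hf q.1 q.2
  unfold ssmooth; rw [he]; exact h

lemma ssmooth_q2 {f : SField} (hf : ssmooth f) : ssmooth (q2 f) := by
  have h : ContDiff ℝ (⊤ : ℕ∞) (fun q : ℝ × ℝ => fderiv ℝ (unc f) q ((0 : ℝ), (1 : ℝ))) :=
    (hf.fderiv_right (mod_cast le_rfl)).clm_apply contDiff_const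
  have he : (fun q : ℝ × ℝ => q2 f q.1 q.2)
      = fun q : ℝ × ℝ => fderiv ℝ (unc f) q ((0 : ℝ), (1 : ℝ)) := by
    funext q; exact q2_eq hf q.1 q.2
  unfold ssmooth; rw [he]; exact h

lemma hasDerivAt_q1 {f : SField} (hf : ssmooth f) (x1 x2 : ℝ) :
    HasDerivAt (fun y => f y x2) (q1 f x1 x2) x1 := by
  rw [q1_eq hf]; exact hasDerivAt_slice1 hf x1 x2

lemma hasDerivAt_q2 {f : SField} (hf : ssmooth f) (x1 x2 : ℝ) :
    HasDerivAt (fun y => f x1 y) (q2 f x1 x2) x2 := by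
  rw [q2_eq hf]; exact hasDerivAt_slice2 hf x1 x2

lemma scont {f : SField} (hf : ssmooth f) : Continuous (unc f) := hf.continuous

lemma cont_slice1 {f : SField} (hf : ssmooth f) (x2 : ℝ) :
    Continuous (fun y => f y x2) :=
  (scont hf).comp (continuous_id.prodMk continuous_const)

lemma cont_slice2 {f : SField} (hf : ssmooth f) (x1 : ℝ) :
    Continuous (fun y => f x1 y) :=
  (scont hf).comp (continuous_const.prodMk continuous_id)

lemma clairaut {f : SField} (hf : ssmooth f) (x1 x2 : ℝ) :
    q1 (q2 f) x1 x2 = q2 (q1 f) x1 x2 := by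
  set F := unc f with hF
  have hdiff : Differentiable ℝ F := hf.differentiable (by simp)
  have hder : ∀ y, HasFDerivAt F (fderiv ℝ F y) y := fun y => (hdiff y).hasFDerivAt
  have hC1 : ContDiff ℝ (⊤ : ℕ∞) (fderiv ℝ F) := hf.fderiv_right (mod_cast le_rfl)
  have hder2 : HasFDerivAt (fderiv ℝ F) (fderiv ℝ (fderiv ℝ F) (x1, x2)) (x1, x2) :=
    ((hC1.differentiable (by simp)) (x1, x2)).hasFDerivAt
  set f'' := fderiv ℝ (fderiv ℝ F) (x1, x2) with hf''
  have key : ∀ v : ℝ × ℝ, HasFDerivAt (fun z => fderiv ℝ F z v)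
      ((ContinuousLinearMap.apply ℝ ℝ v).comp f'') (x1, x2) := fun v =>
    ((ContinuousLinearMap.apply ℝ ℝ v).hasFDerivAt).comp (x1, x2) hder2
  have e1 : q1 (q2 f) x1 x2 = f'' (1, 0) (0, 1) := by
    have hcurve : HasDerivAt (fun y : ℝ => ((y, x2) : ℝ × ℝ)) ((1 : ℝ), (0 : ℝ)) x1 :=
      (hasDerivAt_id x1).prodMk (hasDerivAt_const x1 x2)
    have h := (key (0, 1)).comp_hasDerivAt x1 hcurve
    simp only [Function.comp_def] at h
    have he : (fun y : ℝ => fderiv ℝ F (y, x2) ((0 : ℝ), (1 : ℝ)))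
        = fun y => q2 f y x2 := by
      funext y; exact (q2_eq hf y x2).symm
    rw [he] at h
    simpa [q1] using h.deriv
  have e2 : q2 (q1 f) x1 x2 = f'' (0, 1) (1, 0) := by
    have hcurve : HasDerivAt (fun y : ℝ => ((x1, y) : ℝ × ℝ)) ((0 : ℝ), (1 : ℝ)) x2 :=
      (hasDerivAt_const x2 x1).prodMk (hasDerivAt_id x2)
    have h := (key (1, 0)).comp_hasDerivAt x2 hcurve
    simp only [Function.comp_def] at h
    have he : (fun y : ℝ => fderiv ℝ F (x1, y) ((1 : ℝ), (0 : ℝ)))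
        = fun y => q1 f x1 y := by
      funext y; exact (q1_eq hf x1 y).symm
    rw [he] at h
    simpa [q2] using h.deriv
  rw [e1, e2, second_derivative_symmetric hder hder2 (1, 0) (0, 1)]

lemma speriodic_q2 {Γ : ℝ} {f : SField} (h : speriodic Γ f) : speriodic Γ (q2 f) := by
  intro x1 x2
  unfold q2
  congr 1
  funext y
  exact h x1 y

/-- The restricted product measure on the rectangle Ω. -/
def rmeas (Γ : ℝ) : Measure (ℝ × ℝ) :=
  (volume.restrict (Ioc (0:ℝ) Γ)).prod (volume.restrict (Ioc (0:ℝ) 1))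

lemma integrable_rect {Γ : ℝ} {F : ℝ × ℝ → ℝ} (hF : Continuous F) :
    Integrable F (rmeas Γ) := by
  rw [rmeas, Measure.prod_restrict, ← Measure.volume_eq_prod]
  exact ((hF.continuousOn.integrableOn_compact (isCompact_Icc.prod isCompact_Icc)).mono_set
    (Set.prod_mono Ioc_subset_Icc_self Ioc_subset_Icc_self))

lemma iter_eq_prod {Γ : ℝ} {F : ℝ → ℝ → ℝ} (hF : Continuous (fun z : ℝ × ℝ => F z.1 z.2)) :
    ∫ x1 in Ioc (0:ℝ) Γ, ∫ x2 in Ioc (0:ℝ) 1, F x1 x2 = ∫ z, F z.1 z.2 ∂(rmeas Γ) := by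
  have h : Function.uncurry F = fun z : ℝ × ℝ => F z.1 z.2 := by
    funext z; simp [Function.uncurry]
  have hi : Integrable (Function.uncurry F)
      ((volume.restrict (Ioc (0:ℝ) Γ)).prod (volume.restrict (Ioc (0:ℝ) 1))) := by
    rw [h]; exact integrable_rect hF
  simpa [rmeas] using MeasureTheory.integral_integral hi

lemma swap_rect {Γ : ℝ} {F : ℝ → ℝ → ℝ} (hF : Continuous (fun z : ℝ × ℝ => F z.1 z.2)) :
    ∫ x1 in Ioc (0:ℝ) Γ, ∫ x2 in Ioc (0:ℝ) 1, F x1 x2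
      = ∫ x2 in Ioc (0:ℝ) 1, ∫ x1 in Ioc (0:ℝ) Γ, F x1 x2 := by
  apply integral_integral_swap
  have h : Function.uncurry F = fun z : ℝ × ℝ => F z.1 z.2 := by
    funext z; simp [Function.uncurry]
  rw [h]; exact integrable_rect hF

lemma integral_cs {μ : Measure (ℝ × ℝ)} {f g : ℝ × ℝ → ℝ}
    (hf : Integrable (fun z => f z ^ 2) μ) (hg : Integrable (fun z => g z ^ 2) μ)
    (hfg : Integrable (fun z => f z * g z) μ) :
    |∫ z, f z * g z ∂μ| ≤ Real.sqrt (∫ z, f z ^ 2 ∂μ) * Real.sqrt (∫ z, g z ^ 2 ∂μ) := by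
  set A := ∫ z, f z ^ 2 ∂μ with hA
  set B := ∫ z, g z ^ 2 ∂μ with hB
  set C := ∫ z, f z * g z ∂μ with hC
  have hA0 : 0 ≤ A := integral_nonneg fun z => sq_nonneg _
  have hB0 : 0 ≤ B := integral_nonneg fun z => sq_nonneg _
  have key : ∀ t : ℝ, 0 ≤ A * (t * t) + (2 * C) * t + B := by
    intro t
    have hexp : (fun z => (t * f z + g z) ^ 2)
        = fun z => t ^ 2 * f z ^ 2 + 2 * t * (f z * g z) + g z ^ 2 := by
      funext z; ring
    have hint : ∫ z, (t * f z + g z) ^ 2 ∂μ = A * (t * t) + (2 * C) * t + B := by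
      have h1 : Integrable (fun z => t ^ 2 * f z ^ 2) μ := hf.const_mul _
      have h2 : Integrable (fun z => 2 * t * (f z * g z)) μ := hfg.const_mul _
      have h12 : Integrable (fun z => t ^ 2 * f z ^ 2 + 2 * t * (f z * g z)) μ := h1.add h2
      rw [hexp, integral_add h12 hg, integral_add h1 h2, MeasureTheory.integral_const_mul,
        MeasureTheory.integral_const_mul]
      ring
    rw [← hint]
    exact integral_nonneg fun z => sq_nonneg _
  have hd := discrim_le_zero key
  rw [discrim] at hd
  have hCsq : C ^ 2 ≤ A * B := by nlinarith
  calc |C| = Real.sqrt (C ^ 2) := (Real.sqrt_sq_eq_abs C).symm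
    _ ≤ Real.sqrt (A * B) := Real.sqrt_le_sqrt hCsq
    _ = Real.sqrt A * Real.sqrt B := Real.sqrt_mul hA0 B

lemma bound_mul {Γ : ℝ} {f g : ℝ × ℝ → ℝ} (hf : Continuous f) (hg : Continuous g) :
    |∫ z, f z * g z ∂(rmeas Γ)|
      ≤ Real.sqrt (∫ z, f z ^ 2 ∂(rmeas Γ)) * Real.sqrt (∫ z, g z ^ 2 ∂(rmeas Γ)) :=
  integral_cs (integrable_rect (hf.pow 2)) (integrable_rect (hg.pow 2))
    (integrable_rect (hf.mul hg))

lemma ae_mem_rect {Γ : ℝ} :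
    ∀ᵐ z ∂(rmeas Γ), z ∈ (Ioc (0:ℝ) Γ) ×ˢ (Ioc (0:ℝ) 1) := by
  rw [rmeas, Measure.prod_restrict]
  exact ae_restrict_mem (measurableSet_Ioc.prod measurableSet_Ioc)

lemma bound_weighted {Γ : ℝ} {w f g : ℝ × ℝ → ℝ}
    (hw : Continuous w) (hf : Continuous f) (hg : Continuous g)
    (hwle : ∀ᵐ z ∂(rmeas Γ), |w z| ≤ 1) :
    |∫ z, w z * (f z * g z) ∂(rmeas Γ)|
      ≤ Real.sqrt (∫ z, f z ^ 2 ∂(rmeas Γ)) * Real.sqrt (∫ z, g z ^ 2 ∂(rmeas Γ)) := by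
  have hint1 : Integrable (fun z => w z * (f z * g z)) (rmeas Γ) :=
    integrable_rect (hw.mul (hf.mul hg))
  have hint2 : Integrable (fun z => f z * g z) (rmeas Γ) :=
    integrable_rect (hf.mul hg)
  have habs : |∫ z, w z * (f z * g z) ∂(rmeas Γ)| ≤ ∫ z, |w z * (f z * g z)| ∂(rmeas Γ) := by
    simpa only [Real.norm_eq_abs] using
      norm_integral_le_integral_norm (μ := rmeas Γ) (fun z => w z * (f z * g z))
  have h2 : ∫ z, |w z * (f z * g z)| ∂(rmeas Γ) ≤ ∫ z, |f z * g z| ∂(rmeas Γ) := by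
    refine integral_mono_ae hint1.abs hint2.abs ?_
    filter_upwards [hwle] with z hz
    rw [abs_mul]
    exact mul_le_of_le_one_left (abs_nonneg _) hz
  have h3 : ∫ z, |f z * g z| ∂(rmeas Γ) = ∫ z, |f z| * |g z| ∂(rmeas Γ) := by
    congr 1; funext z; rw [abs_mul]
  have h4 : |∫ z, |f z| * |g z| ∂(rmeas Γ)|
      ≤ Real.sqrt (∫ z, f z ^ 2 ∂(rmeas Γ)) * Real.sqrt (∫ z, g z ^ 2 ∂(rmeas Γ)) := by
    have := integral_cs (μ := rmeas Γ) (f := fun z => |f z|) (g := fun z => |g z|)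
      (by simpa [sq_abs] using integrable_rect (Γ := Γ) (F := fun z => f z ^ 2) (hf.pow 2))
      (by simpa [sq_abs] using integrable_rect (Γ := Γ) (F := fun z => g z ^ 2) (hg.pow 2))
      (by
        have : (fun z => |f z| * |g z|) = fun z => |f z * g z| := by
          funext z; rw [abs_mul]
        rw [this]; exact hint2.abs)
    simpa [sq_abs] using this
  have h5 : ∫ z, |f z| * |g z| ∂(rmeas Γ) = |∫ z, |f z| * |g z| ∂(rmeas Γ)| :=
    (abs_of_nonneg (integral_nonneg fun z => mul_nonneg (abs_nonneg _) (abs_nonneg _))).symm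
  calc |∫ z, w z * (f z * g z) ∂(rmeas Γ)|
      ≤ ∫ z, |w z * (f z * g z)| ∂(rmeas Γ) := habs
    _ ≤ ∫ z, |f z * g z| ∂(rmeas Γ) := h2
    _ = ∫ z, |f z| * |g z| ∂(rmeas Γ) := h3
    _ = |∫ z, |f z| * |g z| ∂(rmeas Γ)| := h5
    _ ≤ _ := h4

lemma ae_weight_le {Γ : ℝ} : ∀ᵐ z ∂(rmeas Γ), |2 * z.2 - 1| ≤ 1 := by
  filter_upwards [ae_mem_rect (Γ := Γ)] with z hz
  have h1 := hz.2.1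
  have h2 := hz.2.2
  rw [abs_le]
  constructor <;> linarith

lemma final_arith {a0 a1 a2 b1 b2 : ℝ} (h0 : 0 ≤ a0) (h1 : 0 ≤ a1) (h2 : 0 ≤ a2)
    (k1 : 0 ≤ b1) (k2 : 0 ≤ b2) :
    2 * (Real.sqrt a0 * Real.sqrt b2) + Real.sqrt a2 * Real.sqrt b2
        + Real.sqrt a1 * Real.sqrt b1
      ≤ 3 * Real.sqrt (a0 + a1 + a2) * Real.sqrt (b1 + b2) := by
  set s := Real.sqrt (a0 + a1 + a2) with hs
  set r := Real.sqrt (b1 + b2) with hr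
  have hs0 : 0 ≤ s := Real.sqrt_nonneg _
  have hr0 : 0 ≤ r := Real.sqrt_nonneg _
  have ha0s : Real.sqrt a0 ≤ s := Real.sqrt_le_sqrt (by linarith)
  have hb2r : Real.sqrt b2 ≤ r := Real.sqrt_le_sqrt (by linarith)
  have part1 : 2 * (Real.sqrt a0 * Real.sqrt b2) ≤ 2 * (s * r) := by
    have := mul_le_mul ha0s hb2r (Real.sqrt_nonneg _) hs0
    linarith
  have part2 : Real.sqrt a2 * Real.sqrt b2 + Real.sqrt a1 * Real.sqrt b1 ≤ s * r := by
    have hkey : (Real.sqrt a2 * Real.sqrt b2 + Real.sqrt a1 * Real.sqrt b1) ^ 2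
        ≤ (a1 + a2) * (b1 + b2) := by
      have e1 := Real.sq_sqrt h1
      have e2 := Real.sq_sqrt h2
      have e3 := Real.sq_sqrt k1
      have e4 := Real.sq_sqrt k2
      nlinarith [sq_nonneg (Real.sqrt a1 * Real.sqrt b2 - Real.sqrt a2 * Real.sqrt b1),
        Real.sqrt_nonneg a1, Real.sqrt_nonneg a2, Real.sqrt_nonneg b1, Real.sqrt_nonneg b2]
    have hnn : 0 ≤ Real.sqrt a2 * Real.sqrt b2 + Real.sqrt a1 * Real.sqrt b1 := by
      positivity
    have h6 : Real.sqrt a2 * Real.sqrt b2 + Real.sqrt a1 * Real.sqrt b1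
        ≤ Real.sqrt ((a1 + a2) * (b1 + b2)) := by
      rw [← Real.sqrt_sq hnn]
      exact Real.sqrt_le_sqrt hkey
    have h7 : Real.sqrt ((a1 + a2) * (b1 + b2)) = Real.sqrt (a1 + a2) * r := by
      rw [hr]; exact Real.sqrt_mul (by linarith) _
    have h8 : Real.sqrt (a1 + a2) ≤ s := Real.sqrt_le_sqrt (by linarith)
    calc Real.sqrt a2 * Real.sqrt b2 + Real.sqrt a1 * Real.sqrt b1
        ≤ Real.sqrt (a1 + a2) * r := by rw [← h7]; exact h6
      _ ≤ s * r := mul_le_mul_of_nonneg_right h8 hr0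
  linarith


/-- trace-type boundary estimate. -/
theorem trace_type_estimate (Γ : ℝ) (hΓ : 0 < Γ) (p u1 u2 : SField)
    (hp : ssmooth p) (hu1 : ssmooth u1) (hu2 : ssmooth u2)
    (hpp : speriodic Γ p) (hpu1 : speriodic Γ u1) (hpu2 : speriodic Γ u2)
    (hinc : ∀ x1 x2, x2 ∈ Icc (0:ℝ) 1 → q1 u1 x1 x2 + q2 u2 x1 x2 = 0)
    (hb0 : ∀ x1, u2 x1 0 = 0) (hb1 : ∀ x1, u2 x1 1 = 0) :
    |∫ x1 in Ioc (0:ℝ) Γ, (p x1 1 * q1 u1 x1 1 + p x1 0 * q1 u1 x1 0)| ≤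
      3 * sH1 Γ p *
        Real.sqrt (intΩ Γ (fun x1 x2 => q2 u1 x1 x2 ^ 2 + q2 u2 x1 x2 ^ 2)) := by
  have hq1p := ssmooth_q1 hp
  have hq2p := ssmooth_q2 hp
  have hq2u1 := ssmooth_q2 hu1
  have hq2u2 := ssmooth_q2 hu2
  have hq2q2u2 := ssmooth_q2 hq2u2
  have hq1q2u1 := ssmooth_q1 hq2u1
  have cP := scont hp
  have cQ1P := scont hq1p
  have cQ2P := scont hq2p
  have cV1 := scont hq2u1
  have cV2 := scont hq2u2
  have cV2' := scont hq2q2u2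
  have cV1' := scont hq1q2u1
  have cW : Continuous (fun z : ℝ × ℝ => 2 * z.2 - 1) :=
    (continuous_const.mul continuous_snd).sub continuous_const
  -- Step 1: fundamental theorem of calculus in x₂
  have hstep1 : ∀ x1 : ℝ, p x1 1 * q1 u1 x1 1 + p x1 0 * q1 u1 x1 0
      = -∫ x2 in Ioc (0:ℝ) 1,
          (2 * (p x1 x2 * q2 u2 x1 x2) + (2 * x2 - 1) * (q2 p x1 x2 * q2 u2 x1 x2)
            + (2 * x2 - 1) * (p x1 x2 * q2 (q2 u2) x1 x2)) := by
    intro x1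
    have hder : ∀ y ∈ uIcc (0:ℝ) 1,
        HasDerivAt (fun y => (2 * y - 1) * (p x1 y * q2 u2 x1 y))
          (2 * (p x1 y * q2 u2 x1 y) + (2 * y - 1) * (q2 p x1 y * q2 u2 x1 y)
            + (2 * y - 1) * (p x1 y * q2 (q2 u2) x1 y)) y := by
      intro y _
      have h1 : HasDerivAt (fun y : ℝ => 2 * y - 1) 2 y := by
        simpa using ((hasDerivAt_id y).const_mul (2:ℝ)).sub_const 1
      have h2 := (hasDerivAt_q2 hp x1 y).fun_mul (hasDerivAt_q2 hq2u2 x1 y)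
      have h3 := h1.fun_mul h2
      refine h3.congr_deriv ?_
      ring
    have hcont : Continuous (fun y =>
        2 * (p x1 y * q2 u2 x1 y) + (2 * y - 1) * (q2 p x1 y * q2 u2 x1 y)
          + (2 * y - 1) * (p x1 y * q2 (q2 u2) x1 y)) := by
      have c1 := cont_slice2 hp x1
      have c2 := cont_slice2 hq2p x1
      have c3 := cont_slice2 hq2u2 x1
      have c4 := cont_slice2 hq2q2u2 x1
      have cw : Continuous (fun y : ℝ => 2 * y - 1) :=
        (continuous_const.mul continuous_id).sub continuous_const
      exact ((continuous_const.mul (c1.mul c3)).add (cw.mul (c2.mul c3))).add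
        (cw.mul (c1.mul c4))
    have hFTC := intervalIntegral.integral_eq_sub_of_hasDerivAt hder (hcont.intervalIntegrable 0 1)
    rw [intervalIntegral.integral_of_le zero_le_one] at hFTC
    have hb1 : q2 u2 x1 1 = -q1 u1 x1 1 := by
      have := hinc x1 1 (by norm_num); linarith
    have hb0 : q2 u2 x1 0 = -q1 u1 x1 0 := by
      have := hinc x1 0 (by norm_num); linarith
    rw [hFTC, hb1, hb0]; ring
  -- Step 2: pass to the product measure
  have cDsum : Continuous (fun z : ℝ × ℝ =>
      2 * (p z.1 z.2 * q2 u2 z.1 z.2) + (2 * z.2 - 1) * (q2 p z.1 z.2 * q2 u2 z.1 z.2)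
        + (2 * z.2 - 1) * (p z.1 z.2 * q2 (q2 u2) z.1 z.2)) :=
    ((continuous_const.mul (cP.mul cV2)).add (cW.mul (cQ2P.mul cV2))).add
      (cW.mul (cP.mul cV2'))
  have hI1 : (∫ x1 in Ioc (0:ℝ) Γ, (p x1 1 * q1 u1 x1 1 + p x1 0 * q1 u1 x1 0))
      = -∫ z, (2 * (p z.1 z.2 * q2 u2 z.1 z.2)
          + (2 * z.2 - 1) * (q2 p z.1 z.2 * q2 u2 z.1 z.2)
          + (2 * z.2 - 1) * (p z.1 z.2 * q2 (q2 u2) z.1 z.2)) ∂(rmeas Γ) := by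
    calc (∫ x1 in Ioc (0:ℝ) Γ, (p x1 1 * q1 u1 x1 1 + p x1 0 * q1 u1 x1 0))
        = ∫ x1 in Ioc (0:ℝ) Γ, -(∫ x2 in Ioc (0:ℝ) 1,
            (2 * (p x1 x2 * q2 u2 x1 x2) + (2 * x2 - 1) * (q2 p x1 x2 * q2 u2 x1 x2)
              + (2 * x2 - 1) * (p x1 x2 * q2 (q2 u2) x1 x2))) :=
          integral_congr_ae (Filter.Eventually.of_forall fun x1 => hstep1 x1)
      _ = -(∫ x1 in Ioc (0:ℝ) Γ, ∫ x2 in Ioc (0:ℝ) 1,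
            (2 * (p x1 x2 * q2 u2 x1 x2) + (2 * x2 - 1) * (q2 p x1 x2 * q2 u2 x1 x2)
              + (2 * x2 - 1) * (p x1 x2 * q2 (q2 u2) x1 x2))) := integral_neg _
      _ = -∫ z, (2 * (p z.1 z.2 * q2 u2 z.1 z.2)
            + (2 * z.2 - 1) * (q2 p z.1 z.2 * q2 u2 z.1 z.2)
            + (2 * z.2 - 1) * (p z.1 z.2 * q2 (q2 u2) z.1 z.2)) ∂(rmeas Γ) :=
          congrArg Neg.neg (iter_eq_prod cDsum)
  have i1 : Integrable (fun z : ℝ × ℝ => 2 * (p z.1 z.2 * q2 u2 z.1 z.2)) (rmeas Γ) :=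
    integrable_rect (continuous_const.mul (cP.mul cV2))
  have i2 : Integrable (fun z : ℝ × ℝ => (2 * z.2 - 1) * (q2 p z.1 z.2 * q2 u2 z.1 z.2))
      (rmeas Γ) := integrable_rect (cW.mul (cQ2P.mul cV2))
  have i3 : Integrable (fun z : ℝ × ℝ => (2 * z.2 - 1) * (p z.1 z.2 * q2 (q2 u2) z.1 z.2))
      (rmeas Γ) := integrable_rect (cW.mul (cP.mul cV2'))
  have i12 : Integrable (fun z : ℝ × ℝ => 2 * (p z.1 z.2 * q2 u2 z.1 z.2)
      + (2 * z.2 - 1) * (q2 p z.1 z.2 * q2 u2 z.1 z.2)) (rmeas Γ) := i1.add i2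
  have hsplit : ∫ z, (2 * (p z.1 z.2 * q2 u2 z.1 z.2)
        + (2 * z.2 - 1) * (q2 p z.1 z.2 * q2 u2 z.1 z.2)
        + (2 * z.2 - 1) * (p z.1 z.2 * q2 (q2 u2) z.1 z.2)) ∂(rmeas Γ)
      = (∫ z, 2 * (p z.1 z.2 * q2 u2 z.1 z.2) ∂(rmeas Γ))
        + (∫ z, (2 * z.2 - 1) * (q2 p z.1 z.2 * q2 u2 z.1 z.2) ∂(rmeas Γ))
        + (∫ z, (2 * z.2 - 1) * (p z.1 z.2 * q2 (q2 u2) z.1 z.2) ∂(rmeas Γ)) := by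
    rw [integral_add i12 i3, integral_add i1 i2]
  -- Step 3: a.e. substitution using incompressibility and symmetry of second derivatives
  have hae : ∀ᵐ z ∂(rmeas Γ), (2 * z.2 - 1) * (p z.1 z.2 * q2 (q2 u2) z.1 z.2)
      = -((2 * z.2 - 1) * (p z.1 z.2 * q1 (q2 u1) z.1 z.2)) := by
    have hnull : (rmeas Γ) {z : ℝ × ℝ | ¬ z.2 ∈ Ioo (0:ℝ) 1} = 0 := by
      have hset : {z : ℝ × ℝ | ¬ z.2 ∈ Ioo (0:ℝ) 1}
          = (univ : Set ℝ) ×ˢ (Ioo (0:ℝ) 1)ᶜ := by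
        ext z; simp [Set.mem_prod]
      have hres : (volume.restrict (Ioc (0:ℝ) 1)) ((Ioo (0:ℝ) 1)ᶜ) = 0 := by
        rw [Measure.restrict_apply measurableSet_Ioo.compl]
        have h1 : (Ioo (0:ℝ) 1)ᶜ ∩ Ioc (0:ℝ) 1 = {1} := by
          ext y
          simp only [mem_inter_iff, mem_compl_iff, mem_Ioo, mem_Ioc, mem_singleton_iff,
            not_and, not_lt]
          constructor
          · rintro ⟨h, h0, h1'⟩
            have := h h0
            linarith
          · rintro rfl
            norm_num
        rw [h1]
        exact measure_singleton 1
      rw [rmeas, hset, Measure.prod_prod, hres, mul_zero]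
    have h2 : ∀ᵐ z ∂(rmeas Γ), z.2 ∈ Ioo (0:ℝ) 1 := by
      rw [ae_iff]; exact hnull
    filter_upwards [h2] with z hz
    have hev : (fun y => q2 u2 z.1 y) =ᶠ[nhds z.2] (fun y => -(q1 u1 z.1 y)) := by
      filter_upwards [isOpen_Ioo.mem_nhds hz] with y hy
      have := hinc z.1 y (Ioo_subset_Icc_self hy)
      linarith
    have hkey : q2 (q2 u2) z.1 z.2 = -(q2 (q1 u1) z.1 z.2) := by
      show deriv (fun y => q2 u2 z.1 y) z.2 = _
      rw [hev.deriv_eq]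
      simp only [deriv.fun_neg]
      rfl
    rw [hkey, ← clairaut hu1 z.1 z.2]
    ring
  have cG : Continuous (fun z : ℝ × ℝ => (2 * z.2 - 1) * (p z.1 z.2 * q1 (q2 u1) z.1 z.2)) :=
    cW.mul (cP.mul cV1')
  have cE3 : Continuous (fun z : ℝ × ℝ => (2 * z.2 - 1) * (q1 p z.1 z.2 * q2 u1 z.1 z.2)) :=
    cW.mul (cQ1P.mul cV1)
  -- Step 4: integration by parts in x₁, using periodicity
  have hIBPinner : ∀ x2 : ℝ,
      (∫ x1 in Ioc (0:ℝ) Γ, (2 * x2 - 1) * (p x1 x2 * q1 (q2 u1) x1 x2))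
        = -∫ x1 in Ioc (0:ℝ) Γ, (2 * x2 - 1) * (q1 p x1 x2 * q2 u1 x1 x2) := by
    intro x2
    have hcore : ∫ x1 in Ioc (0:ℝ) Γ, p x1 x2 * q1 (q2 u1) x1 x2
        = -∫ x1 in Ioc (0:ℝ) Γ, q1 p x1 x2 * q2 u1 x1 x2 := by
      rw [← intervalIntegral.integral_of_le hΓ.le, ← intervalIntegral.integral_of_le hΓ.le]
      have h := intervalIntegral.integral_mul_deriv_eq_deriv_mul
        (u := fun x => p x x2) (v := fun x => q2 u1 x x2)
        (u' := fun x => q1 p x x2) (v' := fun x => q1 (q2 u1) x x2)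
        (fun x _ => hasDerivAt_q1 hp x x2) (fun x _ => hasDerivAt_q1 hq2u1 x x2)
        ((cont_slice1 hq1p x2).intervalIntegrable 0 Γ)
        ((cont_slice1 hq1q2u1 x2).intervalIntegrable 0 Γ)
      have hper1 : p Γ x2 = p 0 x2 := by simpa using hpp 0 x2
      have hper2 : q2 u1 Γ x2 = q2 u1 0 x2 := by simpa using speriodic_q2 hpu1 0 x2
      rw [h]; simp only [hper1, hper2]; ring
    rw [MeasureTheory.integral_const_mul, MeasureTheory.integral_const_mul, hcore]; ring
  have hIBP : ∫ z, (2 * z.2 - 1) * (p z.1 z.2 * q1 (q2 u1) z.1 z.2) ∂(rmeas Γ)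
      = -∫ z, (2 * z.2 - 1) * (q1 p z.1 z.2 * q2 u1 z.1 z.2) ∂(rmeas Γ) := by
    calc ∫ z, (2 * z.2 - 1) * (p z.1 z.2 * q1 (q2 u1) z.1 z.2) ∂(rmeas Γ)
        = ∫ x1 in Ioc (0:ℝ) Γ, ∫ x2 in Ioc (0:ℝ) 1,
            (2 * x2 - 1) * (p x1 x2 * q1 (q2 u1) x1 x2) :=
          (iter_eq_prod (F := fun x1 x2 => (2 * x2 - 1) * (p x1 x2 * q1 (q2 u1) x1 x2)) cG).symm
      _ = ∫ x2 in Ioc (0:ℝ) 1, ∫ x1 in Ioc (0:ℝ) Γ,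
            (2 * x2 - 1) * (p x1 x2 * q1 (q2 u1) x1 x2) := swap_rect cG
      _ = ∫ x2 in Ioc (0:ℝ) 1, -(∫ x1 in Ioc (0:ℝ) Γ,
            (2 * x2 - 1) * (q1 p x1 x2 * q2 u1 x1 x2)) :=
          integral_congr_ae (Filter.Eventually.of_forall fun x2 => hIBPinner x2)
      _ = -(∫ x2 in Ioc (0:ℝ) 1, ∫ x1 in Ioc (0:ℝ) Γ,
            (2 * x2 - 1) * (q1 p x1 x2 * q2 u1 x1 x2)) := integral_neg _
      _ = -(∫ x1 in Ioc (0:ℝ) Γ, ∫ x2 in Ioc (0:ℝ) 1,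
            (2 * x2 - 1) * (q1 p x1 x2 * q2 u1 x1 x2)) :=
          congrArg Neg.neg (swap_rect cE3).symm
      _ = -∫ z, (2 * z.2 - 1) * (q1 p z.1 z.2 * q2 u1 z.1 z.2) ∂(rmeas Γ) :=
          congrArg Neg.neg
            (iter_eq_prod (F := fun x1 x2 => (2 * x2 - 1) * (q1 p x1 x2 * q2 u1 x1 x2)) cE3)
  have hD3 : ∫ z, (2 * z.2 - 1) * (p z.1 z.2 * q2 (q2 u2) z.1 z.2) ∂(rmeas Γ)
      = ∫ z, (2 * z.2 - 1) * (q1 p z.1 z.2 * q2 u1 z.1 z.2) ∂(rmeas Γ) := by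
    rw [integral_congr_ae hae, integral_neg, hIBP, neg_neg]
  -- Step 5: Cauchy-Schwarz bounds
  have hbound1 : |∫ z, 2 * (p z.1 z.2 * q2 u2 z.1 z.2) ∂(rmeas Γ)|
      ≤ 2 * (Real.sqrt (∫ z, p z.1 z.2 ^ 2 ∂(rmeas Γ))
          * Real.sqrt (∫ z, q2 u2 z.1 z.2 ^ 2 ∂(rmeas Γ))) := by
    rw [MeasureTheory.integral_const_mul, abs_mul, abs_of_nonneg (by norm_num : (0:ℝ) ≤ 2)]
    exact mul_le_mul_of_nonneg_left (bound_mul cP cV2) (by norm_num)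
  have hbound2 : |∫ z, (2 * z.2 - 1) * (q2 p z.1 z.2 * q2 u2 z.1 z.2) ∂(rmeas Γ)|
      ≤ Real.sqrt (∫ z, q2 p z.1 z.2 ^ 2 ∂(rmeas Γ))
        * Real.sqrt (∫ z, q2 u2 z.1 z.2 ^ 2 ∂(rmeas Γ)) :=
    bound_weighted cW cQ2P cV2 ae_weight_le
  have hbound3 : |∫ z, (2 * z.2 - 1) * (q1 p z.1 z.2 * q2 u1 z.1 z.2) ∂(rmeas Γ)|
      ≤ Real.sqrt (∫ z, q1 p z.1 z.2 ^ 2 ∂(rmeas Γ))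
        * Real.sqrt (∫ z, q2 u1 z.1 z.2 ^ 2 ∂(rmeas Γ)) :=
    bound_weighted cW cQ1P cV1 ae_weight_le
  -- identification of the norms
  have j1 : Integrable (fun z : ℝ × ℝ => p z.1 z.2 ^ 2) (rmeas Γ) :=
    integrable_rect (cP.pow 2)
  have j2 : Integrable (fun z : ℝ × ℝ => q1 p z.1 z.2 ^ 2) (rmeas Γ) :=
    integrable_rect (cQ1P.pow 2)
  have j3 : Integrable (fun z : ℝ × ℝ => q2 p z.1 z.2 ^ 2) (rmeas Γ) :=
    integrable_rect (cQ2P.pow 2)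
  have j12 : Integrable (fun z : ℝ × ℝ => p z.1 z.2 ^ 2 + q1 p z.1 z.2 ^ 2) (rmeas Γ) :=
    j1.add j2
  have hH1 : sH1 Γ p = Real.sqrt ((∫ z, p z.1 z.2 ^ 2 ∂(rmeas Γ))
      + (∫ z, q1 p z.1 z.2 ^ 2 ∂(rmeas Γ)) + (∫ z, q2 p z.1 z.2 ^ 2 ∂(rmeas Γ))) := by
    rw [sH1, intΩ]
    congr 1
    rw [iter_eq_prod (((cP.pow 2).add (cQ1P.pow 2)).add (cQ2P.pow 2)),
      integral_add j12 j3, integral_add j1 j2]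
  have hNrm : intΩ Γ (fun x1 x2 => q2 u1 x1 x2 ^ 2 + q2 u2 x1 x2 ^ 2)
      = (∫ z, q2 u1 z.1 z.2 ^ 2 ∂(rmeas Γ)) + (∫ z, q2 u2 z.1 z.2 ^ 2 ∂(rmeas Γ)) := by
    rw [intΩ, iter_eq_prod ((cV1.pow 2).add (cV2.pow 2))]
    exact integral_add (integrable_rect (cV1.pow 2)) (integrable_rect (cV2.pow 2))
  -- final assembly
  rw [hH1, hNrm, hI1, abs_neg, hsplit, hD3]
  have habs3 := abs_add_three (∫ z, 2 * (p z.1 z.2 * q2 u2 z.1 z.2) ∂(rmeas Γ))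
    (∫ z, (2 * z.2 - 1) * (q2 p z.1 z.2 * q2 u2 z.1 z.2) ∂(rmeas Γ))
    (∫ z, (2 * z.2 - 1) * (q1 p z.1 z.2 * q2 u1 z.1 z.2) ∂(rmeas Γ))
  have hfinal := final_arith (a0 := ∫ z, p z.1 z.2 ^ 2 ∂(rmeas Γ))
    (a1 := ∫ z, q1 p z.1 z.2 ^ 2 ∂(rmeas Γ)) (a2 := ∫ z, q2 p z.1 z.2 ^ 2 ∂(rmeas Γ))
    (b1 := ∫ z, q2 u1 z.1 z.2 ^ 2 ∂(rmeas Γ)) (b2 := ∫ z, q2 u2 z.1 z.2 ^ 2 ∂(rmeas Γ))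
    (integral_nonneg fun z => sq_nonneg _) (integral_nonneg fun z => sq_nonneg _)
    (integral_nonneg fun z => sq_nonneg _) (integral_nonneg fun z => sq_nonneg _)
    (integral_nonneg fun z => sq_nonneg _)
  calc |(∫ z, 2 * (p z.1 z.2 * q2 u2 z.1 z.2) ∂(rmeas Γ))
        + (∫ z, (2 * z.2 - 1) * (q2 p z.1 z.2 * q2 u2 z.1 z.2) ∂(rmeas Γ))
        + (∫ z, (2 * z.2 - 1) * (q1 p z.1 z.2 * q2 u1 z.1 z.2) ∂(rmeas Γ))|
      ≤ |∫ z, 2 * (p z.1 z.2 * q2 u2 z.1 z.2) ∂(rmeas Γ)|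
        + |∫ z, (2 * z.2 - 1) * (q2 p z.1 z.2 * q2 u2 z.1 z.2) ∂(rmeas Γ)|
        + |∫ z, (2 * z.2 - 1) * (q1 p z.1 z.2 * q2 u1 z.1 z.2) ∂(rmeas Γ)| := habs3
    _ ≤ 2 * (Real.sqrt (∫ z, p z.1 z.2 ^ 2 ∂(rmeas Γ))
          * Real.sqrt (∫ z, q2 u2 z.1 z.2 ^ 2 ∂(rmeas Γ)))
        + Real.sqrt (∫ z, q2 p z.1 z.2 ^ 2 ∂(rmeas Γ))
          * Real.sqrt (∫ z, q2 u2 z.1 z.2 ^ 2 ∂(rmeas Γ))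
        + Real.sqrt (∫ z, q1 p z.1 z.2 ^ 2 ∂(rmeas Γ))
          * Real.sqrt (∫ z, q2 u1 z.1 z.2 ^ 2 ∂(rmeas Γ)) :=
        add_le_add (add_le_add hbound1 hbound2) hbound3
    _ ≤ _ := hfinal


end RB
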